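/- Let q ≥ 3 be odd, and define N_k(2,q) to be the (k+1)-st smallest element (counted with multiplicity, starting from N_0 = 0) of the multiset {2m + qn : m, n ∈ ℕ}. If (B,H,E) is the unique triple with B, E ∈ ℕ, H ∈ {0,1} and ECH index I(B,H,E) = 2k, then its degree satisfies 2qB + qH + 2E = N_k(2,q). -/

import Mathlib

/-- The ECH index `I(b^B h^H e^E)` of the Reeb current `b^B h^H e^E` for the
perturbed `T(2,q)` contact form on `S³`.  Here `E = qm + r` with `0 ≤ r ≤ q−1`
(so `m = E/q` and `r = E%q` as natural numbers), and `⌊2r/q⌋` is realized by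
natural-number division since `0 ≤ 2r/q`. -/
def echI (q B H E : ℕ) : ℚ :=
  2 * E * H - H ^ 2 + (q + 2) * H + 2 * q * B ^ 2 + (q + 3) * B + 4 * E * B
    + 2 * q * H * B + (2 / q) * E ^ 2 + (q + 1) * ((E / q : ℕ) : ℚ)
    - (2 / q) * ((E % q : ℕ) : ℚ) ^ 2 + 2 * ((E % q : ℕ) : ℚ)
    + ((2 * (E % q) / q : ℕ) : ℚ) * (2 * ((E % q : ℕ) : ℚ) - q + 1)

namespace Stmt15Aux

/-- The finite set of lattice points `(m,n)` with `2m + qn < d`. -/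
def A (q d : ℕ) : Finset (ℕ × ℕ) :=
  (Finset.range d ×ˢ Finset.range d).filter (fun p => 2*p.1 + q*p.2 < d)

lemma mem_A {q d : ℕ} (hq : 1 ≤ q) {p : ℕ × ℕ} :
    p ∈ A q d ↔ 2*p.1 + q*p.2 < d := by
  simp only [A, Finset.mem_filter, Finset.mem_product, Finset.mem_range]
  constructor
  · tauto
  · intro h
    have h1 : p.2 ≤ q * p.2 := Nat.le_mul_of_pos_left _ hq
    omega

/-- The counting function: number of lattice points below level `d`. -/
def a (q d : ℕ) : ℕ := (A q d).card

lemma rec2 {q : ℕ} (hq : 1 ≤ q) (d : ℕ) : a q (d+2) = a q d + ((d+1)/q + 1) := by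
  classical
  have hsplit : ((A q (d+2)).filter (fun p => p.1 = 0)).card
      + ((A q (d+2)).filter (fun p => ¬ p.1 = 0)).card = a q (d+2) :=
    Finset.card_filter_add_card_filter_not _
  have h1 : ((A q (d+2)).filter (fun p => ¬ p.1 = 0)).card = a q d := by
    apply Finset.card_nbij' (fun p => (p.1 - 1, p.2)) (fun p => (p.1 + 1, p.2))
    · intro p hp
      simp only [Finset.mem_coe] at hp ⊢
      simp only [Finset.mem_filter, mem_A hq] at hp
      rw [mem_A hq]
      show 2*(p.1-1) + q*p.2 < d
      omega
    · intro p hp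
      simp only [Finset.mem_coe] at hp ⊢
      rw [mem_A hq] at hp
      simp only [Finset.mem_filter, mem_A hq]
      refine ⟨?_, by simp⟩
      show 2*(p.1+1) + q*p.2 < d + 2
      omega
    · intro p hp
      simp only [Finset.mem_coe] at hp
      simp only [Finset.mem_filter] at hp
      have : p.1 - 1 + 1 = p.1 := by omega
      ext <;> simp [this]
    · intro p hp
      ext <;> simp
  have h2 : ((A q (d+2)).filter (fun p => p.1 = 0)).card = (d+1)/q + 1 := by
    have : ((A q (d+2)).filter (fun p => p.1 = 0)).card = (Finset.range ((d+1)/q + 1)).card := by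
      apply Finset.card_nbij' (fun p => p.2) (fun n => (0, n))
      · intro p hp
        simp only [Finset.mem_coe] at hp ⊢
        simp only [Finset.mem_filter, mem_A hq] at hp
        rw [Finset.mem_range, Nat.lt_succ_iff, Nat.le_div_iff_mul_le hq, mul_comm]
        omega
      · intro n hn
        simp only [Finset.mem_coe] at hn ⊢
        rw [Finset.mem_range, Nat.lt_succ_iff, Nat.le_div_iff_mul_le hq, mul_comm] at hn
        simp only [Finset.mem_filter, mem_A hq]
        refine ⟨?_, trivial⟩
        show 2*0 + q*n < d + 2
        omega
      · intro p hp
        simp only [Finset.mem_coe] at hp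
        simp only [Finset.mem_filter] at hp
        ext <;> simp [hp.2]
      · intro n hn
        simp
    rw [this, Finset.card_range]
  omega

lemma recq {q : ℕ} (hq : 1 ≤ q) (d : ℕ) : a q (d+q) = a q d + (d+q+1)/2 := by
  classical
  have hsplit : ((A q (d+q)).filter (fun p => p.2 = 0)).card
      + ((A q (d+q)).filter (fun p => ¬ p.2 = 0)).card = a q (d+q) :=
    Finset.card_filter_add_card_filter_not _
  have h1 : ((A q (d+q)).filter (fun p => ¬ p.2 = 0)).card = a q d := by
    apply Finset.card_nbij' (fun p => (p.1, p.2 - 1)) (fun p => (p.1, p.2 + 1))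
    · intro p hp
      simp only [Finset.mem_coe] at hp ⊢
      simp only [Finset.mem_filter, mem_A hq] at hp
      rw [mem_A hq]
      have h2' : p.2 - 1 + 1 = p.2 := by omega
      have hkey : q * p.2 = q * (p.2 - 1) + q := by
        conv_lhs => rw [← h2']
        ring
      show 2*p.1 + q*(p.2-1) < d
      omega
    · intro p hp
      simp only [Finset.mem_coe] at hp ⊢
      rw [mem_A hq] at hp
      simp only [Finset.mem_filter, mem_A hq]
      refine ⟨?_, by simp⟩
      show 2*p.1 + q*(p.2+1) < d + q
      have hkey : q * (p.2 + 1) = q * p.2 + q := by ring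
      omega
    · intro p hp
      simp only [Finset.mem_coe] at hp
      simp only [Finset.mem_filter] at hp
      have : p.2 - 1 + 1 = p.2 := by omega
      ext <;> simp [this]
    · intro p hp
      ext <;> simp
  have h2 : ((A q (d+q)).filter (fun p => p.2 = 0)).card = (d+q+1)/2 := by
    have : ((A q (d+q)).filter (fun p => p.2 = 0)).card = (Finset.range ((d+q+1)/2)).card := by
      apply Finset.card_nbij' (fun p => p.1) (fun m => (m, 0))
      · intro p hp
        simp only [Finset.mem_coe] at hp ⊢
        simp only [Finset.mem_filter, mem_A hq] at hp
        rw [Finset.mem_range]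
        omega
      · intro m hm
        simp only [Finset.mem_coe] at hm ⊢
        rw [Finset.mem_range] at hm
        simp only [Finset.mem_filter, mem_A hq]
        refine ⟨?_, trivial⟩
        show 2*m + q*0 < d + q
        omega
      · intro p hp
        simp only [Finset.mem_coe] at hp
        simp only [Finset.mem_filter] at hp
        ext <;> simp [hp.2]
      · intro m hm
        simp
    rw [this, Finset.card_range]
  omega

lemma a_even {q : ℕ} (hq : 3 ≤ q) (ho : Odd q) (B : ℕ) :
    a q (2*q*B) = q*B^2 + ((q+1)/2)*B := by
  obtain ⟨h, hq'⟩ := ho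
  have hh : (q+1)/2 = h + 1 := by omega
  induction B with
  | zero => simp [a, A]
  | succ B ih =>
    have heq : 2*q*(B+1) = (2*q*B + q) + q := by ring
    rw [heq, recq (by omega), recq (by omega), ih]
    have hu : 2*q*B = 2*(q*B) := by ring
    have d1 : (2*q*B + q + 1)/2 = q*B + h + 1 := by rw [hu]; omega
    have d2 : (2*q*B + q + q + 1)/2 = q*B + q := by rw [hu]; omega
    rw [d1, d2, hh]
    ring

lemma a_succ_ge {q : ℕ} (hq : 3 ≤ q) (B H E : ℕ) :
    a q (2*E + q*(2*B+H)) + (B+1) ≤ a q (2*E + q*(2*B+H) + 1) := by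
  classical
  set d := 2*E + q*(2*B+H) with hd
  set S := (Finset.range (B+1)).image (fun j => (E + q*(B-j), H + 2*j)) with hS
  have hval : ∀ j, j ≤ B → 2*(E + q*(B-j)) + q*(H + 2*j) = d := by
    intro j hj
    obtain ⟨c, rfl⟩ : ∃ c, B = j + c := ⟨B - j, by omega⟩
    have hc : j + c - j = c := by omega
    rw [hc, hd]
    ring
  have hScard : S.card = B + 1 := by
    rw [hS, Finset.card_image_of_injOn, Finset.card_range]
    intro j₁ h₁ j₂ h₂ he
    have := congrArg Prod.snd he
    simp only at this
    omega
  have hSsub : S ⊆ A q (d+1) := by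
    intro p hp
    rw [hS, Finset.mem_image] at hp
    obtain ⟨j, hj, rfl⟩ := hp
    rw [mem_A (by omega)]
    show 2*(E + q*(B-j)) + q*(H + 2*j) < d + 1
    have := hval j (by simpa using Nat.lt_succ_iff.mp (Finset.mem_range.mp hj))
    omega
  have hdisj : Disjoint (A q d) S := by
    rw [Finset.disjoint_left]
    intro p hpA hpS
    rw [mem_A (by omega)] at hpA
    rw [hS, Finset.mem_image] at hpS
    obtain ⟨j, hj, rfl⟩ := hpS
    have hpA' : 2*(E + q*(B-j)) + q*(H + 2*j) < d := hpA
    have := hval j (by simpa using Nat.lt_succ_iff.mp (Finset.mem_range.mp hj))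
    omega
  have hunion : A q d ∪ S ⊆ A q (d+1) := by
    intro p hp
    rcases Finset.mem_union.mp hp with hp | hp
    · rw [mem_A (by omega)] at hp ⊢; omega
    · exact hSsub hp
  calc a q d + (B+1) = (A q d ∪ S).card := by
        rw [Finset.card_union_of_disjoint hdisj, hScard]; rfl
    _ ≤ (A q (d+1)).card := Finset.card_le_card hunion
    _ = a q (d+1) := rfl

lemma lowerset_eq_range (s : Finset ℕ) (hs : ∀ j ∈ s, ∀ i, i ≤ j → i ∈ s) :
    s = Finset.range s.card := by
  have hsub : s ⊆ Finset.range s.card := by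
    intro j hj
    by_contra hc
    simp only [Finset.mem_range, not_lt] at hc
    have h2 : Finset.range (j+1) ⊆ s := by
      intro i hi
      exact hs j hj i (Nat.lt_succ_iff.mp (Finset.mem_range.mp hi))
    have := Finset.card_le_card h2
    simp at this
    omega
  exact Finset.eq_of_subset_of_card_le hsub (by simp)

lemma char (q : ℕ) (hq : 3 ≤ q) (N : ℕ → ℕ) (hmono : Monotone N) (g : ℕ ≃ ℕ × ℕ)
    (hN : ∀ k, N k = 2 * (g k).1 + q * (g k).2) (d : ℕ) :
    ∀ j, N j < d ↔ j < a q d := by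
  classical
  set T : Finset ℕ := (A q d).image (fun p => g.symm p) with hT
  have memT : ∀ j, j ∈ T ↔ N j < d := by
    intro j
    simp only [hT, Finset.mem_image]
    constructor
    · rintro ⟨p, hp, rfl⟩
      rw [hN, Equiv.apply_symm_apply]
      exact (mem_A (by omega)).mp hp
    · intro h
      exact ⟨g j, (mem_A (by omega)).mpr (by rw [← hN]; exact h), Equiv.symm_apply_apply _ _⟩
  have cardT : T.card = a q d := by
    rw [hT, Finset.card_image_of_injective _ g.symm.injective]; rfl
  have hlow : ∀ j ∈ T, ∀ i, i ≤ j → i ∈ T := by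
    intro j hj i hij
    rw [memT] at hj ⊢
    exact lt_of_le_of_lt (hmono hij) hj
  have := lowerset_eq_range T hlow
  intro j
  rw [← memT, this, cardT, Finset.mem_range]

lemma step {q : ℕ} (hq : 3 ≤ q) (ho : Odd q) (B H E : ℕ) :
    echI q B H (E+1) = echI q B H E
      + 2 * ((((2*E + q*(2*B+H) + 1)/q : ℕ) : ℚ) + 1) := by
  have hq0 : 0 < q := by omega
  obtain ⟨h, hq'⟩ := ho
  have hEq : q * (E / q) + E % q = E := Nat.div_add_mod E q
  have hrq : E % q < q := Nat.mod_lt _ hq0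
  set m := E / q with hm
  set r := E % q with hr
  have hdiv : (2*E + q*(2*B+H) + 1)/q = (2*r+1)/q + (2*m + (2*B+H)) := by
    have e1 : 2*E + q*(2*B+H) + 1 = (2*r+1) + q*(2*m + (2*B+H)) := by rw [← hEq]; ring
    rw [e1, Nat.add_mul_div_left _ _ hq0]
  have hEQ : (E : ℚ) = q * m + r := by rw [← hEq]; push_cast; ring
  have hqQ : (q : ℚ) ≠ 0 := by positivity
  rcases Nat.lt_or_ge (r+1) q with hcase | hcase
  · -- (E+1)/q = m, (E+1)%q = r+1
    have e2 : E + 1 = (r+1) + q*m := by rw [← hEq]; ring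
    have hdm : (E+1)/q = m := by
      rw [e2, Nat.add_mul_div_left _ _ hq0, Nat.div_eq_of_lt hcase]; omega
    have hmm : (E+1)%q = r+1 := by
      rw [e2, Nat.add_mul_mod_self_left, Nat.mod_eq_of_lt hcase]
    simp only [echI, hdm, hmm, ← hm, ← hr, hdiv]
    rcases Nat.lt_or_ge (2*r+2) q with hc2 | hc2
    · -- all divs 0
      have f1 : (2*r)/q = 0 := Nat.div_eq_of_lt (by omega)
      have f2 : (2*(r+1))/q = 0 := Nat.div_eq_of_lt (by omega)
      have f3 : (2*r+1)/q = 0 := Nat.div_eq_of_lt (by omega)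
      rw [f1, f2, f3]
      push_cast
      rw [hEQ]
      field_simp
      ring
    · rcases Nat.lt_or_ge (2*r) q with hc3 | hc3
      · -- q = 2r+1
        have hq2 : q = 2*r+1 := by omega
        have f1 : (2*r)/q = 0 := Nat.div_eq_of_lt (by omega)
        have f2 : (2*(r+1))/q = 1 := by
          apply Nat.div_eq_of_lt_le <;> omega
        have f3 : (2*r+1)/q = 1 := by
          apply Nat.div_eq_of_lt_le <;> omega
        rw [f1, f2, f3]
        push_cast
        rw [hEQ]
        have hq2Q : (q : ℚ) = 2*r+1 := by exact_mod_cast hq2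
        rw [hq2Q]
        have : ((2:ℚ)*r+1) ≠ 0 := by positivity
        field_simp
        ring
      · -- all divs 1
        have f1 : (2*r)/q = 1 := by apply Nat.div_eq_of_lt_le <;> omega
        have f2 : (2*(r+1))/q = 1 := by apply Nat.div_eq_of_lt_le <;> omega
        have f3 : (2*r+1)/q = 1 := by apply Nat.div_eq_of_lt_le <;> omega
        rw [f1, f2, f3]
        push_cast
        rw [hEQ]
        field_simp
        ring
  · -- r = q - 1
    have hre : r + 1 = q := by omega
    have e2 : E + 1 = q * (m + 1) := by rw [← hEq, ← hre]; ring
    have hdm : (E+1)/q = m + 1 := by rw [e2, Nat.mul_div_cancel_left _ hq0]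
    have hmm : (E+1)%q = 0 := by rw [e2, Nat.mul_mod_right]
    simp only [echI, hdm, hmm, ← hm, ← hr, hdiv]
    have f1 : (2*r)/q = 1 := by apply Nat.div_eq_of_lt_le <;> omega
    have f3 : (2*r+1)/q = 1 := by apply Nat.div_eq_of_lt_le <;> omega
    have f2 : (2*0)/q = 0 := by simp
    rw [f1, f2, f3]
    push_cast
    rw [hEQ]
    have hq2Q : (q : ℚ) = r + 1 := by exact_mod_cast hre.symm
    rw [hq2Q]
    have : ((r:ℚ)+1) ≠ 0 := by positivity
    field_simp
    ring

lemma key {q : ℕ} (hq : 3 ≤ q) (ho : Odd q) (B H E : ℕ) (hH : H ≤ 1) :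
    echI q B H E = 2 * ((a q (2*E + q*(2*B+H)) + B : ℕ) : ℚ) := by
  obtain ⟨h, hq'⟩ := ho
  have hoq : Odd q := ⟨h, hq'⟩
  induction E with
  | zero =>
    interval_cases H
    · have harg : 2*0 + q*(2*B+0) = 2*q*B := by ring
      rw [harg, a_even hq hoq]
      have hh : (q+1)/2 = h + 1 := by omega
      rw [hh]
      simp only [echI, Nat.zero_div, Nat.zero_mod, Nat.mul_zero, Nat.zero_mul]
      push_cast [hq']
      ring
    · have harg : 2*0 + q*(2*B+1) = 2*q*B + q := by ring
      rw [harg, recq (by omega), a_even hq hoq]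
      have hh : (q+1)/2 = h + 1 := by omega
      have hu : 2*q*B = 2*(q*B) := by ring
      have d1 : (2*q*B + q + 1)/2 = q*B + h + 1 := by rw [hu]; omega
      rw [hh, d1]
      simp only [echI, Nat.zero_div, Nat.zero_mod, Nat.mul_zero, Nat.zero_mul]
      push_cast [hq']
      ring
  | succ E ih =>
    have harg : 2*(E+1) + q*(2*B+H) = (2*E + q*(2*B+H)) + 2 := by ring
    rw [harg, rec2 (by omega), step hq hoq B H E, ih]
    push_cast
    ring

end Stmt15Aux

/-- if `N : ℕ → ℕ` enumerates the multiset `{2m + qn : m,n ∈ ℕ}`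
in increasing order with multiplicity (i.e. `N` is monotone and factors through
a bijection with `ℕ × ℕ`), and `(B,H,E)` with `H ∈ {0,1}` has ECH index
`I(B,H,E) = 2k`, then `2qB + qH + 2E = N k`. -/
theorem stmt_15 (q : ℕ) (hq3 : 3 ≤ q) (hqodd : Odd q)
    (N : ℕ → ℕ) (hmono : Monotone N) (g : ℕ ≃ ℕ × ℕ)
    (hN : ∀ k, N k = 2 * (g k).1 + q * (g k).2)
    (B H E k : ℕ) (hH : H ≤ 1) (hI : echI q B H E = 2 * k) :
    2 * q * B + q * H + 2 * E = N k := by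
  have hkey := Stmt15Aux.key hq3 hqodd B H E hH
  set d := 2*E + q*(2*B+H) with hd
  have hk : k = Stmt15Aux.a q d + B := by
    have : ((k : ℕ) : ℚ) = ((Stmt15Aux.a q d + B : ℕ) : ℚ) := by
      have h2 : (2 : ℚ) * k = 2 * ((Stmt15Aux.a q d + B : ℕ) : ℚ) := by
        rw [← hI, hkey]
      have := mul_left_cancel₀ (two_ne_zero (α := ℚ)) h2
      exact_mod_cast this
    exact_mod_cast this
  have hchar := Stmt15Aux.char q hq3 N hmono g hN
  have hge : d ≤ N k := by
    by_contra hc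
    push_neg at hc
    have := (hchar d k).mp hc
    omega
  have hlt : N k < d + 1 := by
    rw [hchar (d+1) k]
    have h3 := Stmt15Aux.a_succ_ge hq3 B H E
    rw [← hd] at h3
    omega
  have hNk : N k = d := by omega
  rw [hNk, hd]
  ring
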